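/- If k is a C² solution of the kernel equation on D, then the function G defined on E by G(ξ,η) := k((ξ+η)/2, (ξ−η)/2) satisfies the integral equation G(ξ,η) = G0(ξ,η) + Φ_G(ξ,η) for all (ξ,η) ∈ E. -/

import Mathlib

open MeasureTheory Set
open scoped ENNReal

noncomputable section

/-- The triangular domain `D = {(x,y) : 0 ≤ y ≤ x ≤ 1}`. -/
def Dset : Set (ℝ × ℝ) := {p : ℝ × ℝ | 0 ≤ p.2 ∧ p.2 ≤ p.1 ∧ p.1 ≤ 1}

/-- Partial derivative in the first variable (within `D`). -/
def pd1 (K : ℝ × ℝ → ℝ) (p : ℝ × ℝ) : ℝ := fderivWithin ℝ K Dset p (1, 0)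

/-- Partial derivative in the second variable (within `D`). -/
def pd2 (K : ℝ × ℝ → ℝ) (p : ℝ × ℝ) : ℝ := fderivWithin ℝ K Dset p (0, 1)

/-- `K` is a `C²` solution of the kernel equation on `D`:
(i) `k_xx - k_yy = μ k + f + ∫_y^x k(x,z) f(z,y) dz` on `D`;
(ii) `k_x(x,x) + k_y(x,x) = λ0/2`; (iii) `k_y(x,0) = 0`; (iv) `k(0,0) = 0`. -/
def IsKernelSol (lam0 : ℝ) (c1 : ℝ → ℝ) (f : ℝ → ℝ → ℝ) (K : ℝ × ℝ → ℝ) : Prop :=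
  ContDiffOn ℝ 2 K Dset ∧
  (∀ p ∈ Dset, pd1 (pd1 K) p - pd2 (pd2 K) p =
      (lam0 - c1 p.1 + c1 p.2) * K p + f p.1 p.2 + ∫ z in p.2..p.1, K (p.1, z) * f z p.2) ∧
  (∀ x ∈ Icc (0:ℝ) 1, pd1 K (x, x) + pd2 K (x, x) = lam0 / 2) ∧
  (∀ x ∈ Icc (0:ℝ) 1, pd2 K (x, 0) = 0) ∧
  K (0, 0) = 0

/-- The transformed domain `E = {(ξ,η) : 0 ≤ η ≤ 1, η ≤ ξ ≤ 2 - η}`. -/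
def Eset : Set (ℝ × ℝ) := {p : ℝ × ℝ | 0 ≤ p.2 ∧ p.2 ≤ 1 ∧ p.2 ≤ p.1 ∧ p.1 ≤ 2 - p.2}

/-- `μ̃(ξ,η) := λ0 - c1((ξ+η)/2) + c1((ξ-η)/2)`. -/
def mutld (lam0 : ℝ) (c1 : ℝ → ℝ) (xi eta : ℝ) : ℝ :=
  lam0 - c1 ((xi + eta) / 2) + c1 ((xi - eta) / 2)

/-- The inhomogeneous term `G0` of the integral equation. -/
def Gzero (lam0 : ℝ) (f : ℝ → ℝ → ℝ) (xi eta : ℝ) : ℝ :=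
  lam0 / 4 * (xi + eta)
    + (1 / 4) * (∫ tau in eta..xi, ∫ s in (0:ℝ)..eta, f ((tau + s) / 2) ((tau - s) / 2))
    + (1 / 2) * (∫ tau in (0:ℝ)..eta, ∫ s in (0:ℝ)..tau, f ((tau + s) / 2) ((tau - s) / 2))

/-- The integral operator `Φ_H`. -/
def Phi (lam0 : ℝ) (c1 : ℝ → ℝ) (f : ℝ → ℝ → ℝ) (H : ℝ → ℝ → ℝ) (xi eta : ℝ) : ℝ :=
  (1 / 4) * (∫ tau in eta..xi, ∫ s in (0:ℝ)..eta, mutld lam0 c1 tau s * H tau s)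
    + (1 / 2) * (∫ tau in (0:ℝ)..eta, ∫ s in (0:ℝ)..tau, mutld lam0 c1 tau s * H tau s)
    + (1 / 4) * (∫ z in eta..xi, ∫ s in (0:ℝ)..eta, ∫ tau in z..(z + eta - s),
        f ((tau - s) / 2) (z - (tau + s) / 2) * H tau s)
    + (1 / 2) * (∫ z in (0:ℝ)..eta, ∫ s in (0:ℝ)..z, ∫ tau in z..(2 * z - s),
        f ((tau - s) / 2) (z - (tau + s) / 2) * H tau s)

/-! ### Auxiliary facts about the domain `D` -/

lemma Dset_isClosed : IsClosed Dset := by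
  have h1 : IsClosed {p : ℝ × ℝ | 0 ≤ p.2} := isClosed_le continuous_const continuous_snd
  have h2 : IsClosed {p : ℝ × ℝ | p.2 ≤ p.1} := isClosed_le continuous_snd continuous_fst
  have h3 : IsClosed {p : ℝ × ℝ | p.1 ≤ 1} := isClosed_le continuous_fst continuous_const
  have : Dset = {p : ℝ × ℝ | 0 ≤ p.2} ∩ ({p : ℝ × ℝ | p.2 ≤ p.1} ∩ {p : ℝ × ℝ | p.1 ≤ 1}) := rfl
  rw [this]; exact h1.inter (h2.inter h3)

lemma Dset_convex : Convex ℝ Dset := by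
  intro p hp q hq a b ha hb hab
  obtain ⟨hp1, hp2, hp3⟩ := hp
  obtain ⟨hq1, hq2, hq3⟩ := hq
  refine ⟨?_, ?_, ?_⟩ <;> simp only [Prod.smul_snd, Prod.smul_fst, Prod.fst_add, Prod.snd_add,
    smul_eq_mul]
  · positivity
  · nlinarith
  · nlinarith

lemma Dset_ball : Metric.ball ((1/2, 1/4) : ℝ × ℝ) (1/8) ⊆ Dset := by
  intro p hp
  simp only [Metric.mem_ball, Prod.dist_eq, max_lt_iff, Real.dist_eq, abs_lt] at hp
  obtain ⟨⟨h1, h2⟩, h3, h4⟩ := hp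
  exact ⟨by linarith, by linarith, by linarith⟩

lemma Dset_interior_nonempty : (interior Dset).Nonempty :=
  ⟨(1/2, 1/4), mem_interior.2 ⟨Metric.ball _ (1/8), Dset_ball, Metric.isOpen_ball,
    Metric.mem_ball_self (by norm_num)⟩⟩

lemma Dset_uniqueDiffOn : UniqueDiffOn ℝ Dset :=
  uniqueDiffOn_convex Dset_convex Dset_interior_nonempty

lemma Dset_mem_closure_interior {p : ℝ × ℝ} (hp : p ∈ Dset) :
    p ∈ closure (interior Dset) := by
  obtain ⟨y, hy⟩ := Dset_interior_nonempty
  have key : ∀ n : ℕ, (1 - (1:ℝ)/(n+2)) • p + ((1:ℝ)/(n+2)) • y ∈ interior Dset := by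
    intro n
    have hle : (1:ℝ)/(n+2) ≤ 1 := by
      rw [div_le_one (by positivity)]; linarith [Nat.cast_nonneg (α := ℝ) n]
    apply Dset_convex.combo_self_interior_mem_interior hp hy (by linarith)
      (by positivity) (by ring)
  have h0 : Filter.Tendsto (fun n : ℕ => (1:ℝ)/(n+2)) Filter.atTop (nhds 0) := by
    have := tendsto_one_div_add_atTop_nhds_zero_nat (𝕜 := ℝ)
    exact this.comp (Filter.tendsto_add_atTop_nat 1) |>.congr (fun n => by
      simp only [Function.comp_apply]; push_cast; ring_nf)
  have hlim : Filter.Tendsto (fun n : ℕ => (1 - (1:ℝ)/(n+2)) • p + ((1:ℝ)/(n+2)) • y)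
      Filter.atTop (nhds p) := by
    have : Filter.Tendsto (fun n : ℕ => (1 - (1:ℝ)/(n+2)) • p + ((1:ℝ)/(n+2)) • y)
        Filter.atTop (nhds (((1:ℝ) - 0) • p + (0:ℝ) • y)) :=
      (((tendsto_const_nhds.sub h0).smul tendsto_const_nhds).add (h0.smul tendsto_const_nhds))
    simpa using this
  exact mem_closure_of_tendsto hlim (Filter.Eventually.of_forall key)

/-! ### Continuous extensions -/

lemma exists_cont_ext {X : Type*} [TopologicalSpace X] [NormalSpace X] {s : Set X}
    (hs : IsClosed s) {f : X → ℝ} (hf : ContinuousOn f s) :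
    ∃ g : X → ℝ, Continuous g ∧ ∀ p ∈ s, g p = f p := by
  obtain ⟨g, hg⟩ := ContinuousMap.exists_restrict_eq (Y := ℝ) hs
    ⟨s.restrict f, continuousOn_iff_continuous_restrict.mp hf⟩
  refine ⟨g, g.continuous, fun p hp => ?_⟩
  have := congrFun (congrArg ContinuousMap.toFun hg) ⟨p, hp⟩
  exact this

/-! ### Fundamental theorem of calculus on a segment -/

lemma ftc_seg {g g' : ℝ → ℝ} {a b : ℝ} (hab : a ≤ b)
    (hcont : ContinuousOn g (Icc a b))
    (hderiv : ∀ x ∈ Ioo a b, HasDerivWithinAt g (g' x) (Icc a b) x)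
    (hint : IntervalIntegrable g' volume a b) :
    ∫ y in a..b, g' y = g b - g a := by
  apply intervalIntegral.integral_eq_sub_of_hasDeriv_right_of_le hab hcont ?_ hint
  intro x hx
  exact ((hderiv x hx).hasDerivAt (Icc_mem_nhds hx.1 hx.2)).hasDerivWithinAt

/-! ### Swapping iterated integrals over a triangle -/

lemma triangle_swap {R : ℝ → ℝ → ℝ} (hR : Continuous fun p : ℝ × ℝ => R p.1 p.2)
    {a c : ℝ} (hac : a ≤ c) :
    (∫ w in a..c, ∫ τ in a..w, R τ w) = ∫ τ in a..c, ∫ w in τ..c, R τ w := by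
  set ν := volume.restrict (Ioc a c) with hν
  have hint : Integrable (fun p : ℝ × ℝ =>
      ({q : ℝ × ℝ | q.1 ≤ q.2}.indicator (fun q => R q.1 q.2)) p) (ν.prod ν) := by
    rw [hν, Measure.prod_restrict]
    apply Integrable.indicator
    · exact (hR.continuousOn.integrableOn_compact (isCompact_Icc.prod isCompact_Icc)).mono_set
        (prod_mono Ioc_subset_Icc_self Ioc_subset_Icc_self)
    · exact measurableSet_le measurable_fst measurable_snd
  have swap : (∫ w, ∫ τ, ({q : ℝ × ℝ | q.1 ≤ q.2}.indicator (fun q => R q.1 q.2)) (τ, w) ∂ν ∂ν)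
      = ∫ τ, ∫ w, ({q : ℝ × ℝ | q.1 ≤ q.2}.indicator (fun q => R q.1 q.2)) (τ, w) ∂ν ∂ν := by
    have h1 : Integrable (Function.uncurry fun w τ =>
        ({q : ℝ × ℝ | q.1 ≤ q.2}.indicator (fun q => R q.1 q.2)) (τ, w)) (ν.prod ν) := by
      apply (hint.swap)
    exact MeasureTheory.integral_integral_swap h1
  have hL : (∫ w in a..c, ∫ τ in a..w, R τ w)
      = ∫ w, ∫ τ, ({q : ℝ × ℝ | q.1 ≤ q.2}.indicator (fun q => R q.1 q.2)) (τ, w) ∂ν ∂ν := by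
    rw [intervalIntegral.integral_of_le hac]
    apply setIntegral_congr_fun measurableSet_Ioc
    intro w hw
    have : ∀ τ : ℝ, ({q : ℝ × ℝ | q.1 ≤ q.2}.indicator (fun q => R q.1 q.2)) (τ, w)
        = (Iic w).indicator (fun τ => R τ w) τ := by
      intro τ
      by_cases h : τ ≤ w <;> simp [Set.indicator, h]
    simp only [this]
    rw [integral_indicator measurableSet_Iic, Measure.restrict_restrict measurableSet_Iic,
      intervalIntegral.integral_of_le hw.1.le]
    congr 1
    rw [show Iic w ∩ Ioc a c = Ioc a w from by
      ext x
      simp only [mem_inter_iff, mem_Iic, mem_Ioc]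
      exact ⟨fun ⟨h1, h2, h3⟩ => ⟨h2, h1⟩, fun ⟨h1, h2⟩ => ⟨h2, h1, h2.trans hw.2⟩⟩]
  have hRH : (∫ τ in a..c, ∫ w in τ..c, R τ w)
      = ∫ τ, ∫ w, ({q : ℝ × ℝ | q.1 ≤ q.2}.indicator (fun q => R q.1 q.2)) (τ, w) ∂ν ∂ν := by
    rw [intervalIntegral.integral_of_le hac]
    apply setIntegral_congr_fun measurableSet_Ioc
    intro τ hτ
    have : ∀ w : ℝ, ({q : ℝ × ℝ | q.1 ≤ q.2}.indicator (fun q => R q.1 q.2)) (τ, w)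
        = (Ici τ).indicator (fun w => R τ w) w := by
      intro w
      by_cases h : τ ≤ w <;> simp [Set.indicator, h]
    simp only [this]
    rw [integral_indicator measurableSet_Ici, Measure.restrict_restrict measurableSet_Ici,
      intervalIntegral.integral_of_le hτ.2,
      show Ici τ ∩ Ioc a c = Icc τ c from by
        ext x
        simp only [mem_inter_iff, mem_Ici, mem_Ioc, mem_Icc]
        exact ⟨fun ⟨h1, h2, h3⟩ => ⟨h1, h3⟩, fun ⟨h1, h2⟩ => ⟨h1, hτ.1.trans_le h1, h2⟩⟩]
    exact (integral_Icc_eq_integral_Ioc).symm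
  rw [hL, swap, ← hRH]

/-! ### The change of variables chain -/

lemma chain_cov {Kc Fc : ℝ × ℝ → ℝ} (hKc : Continuous Kc) (hFc : Continuous Fc)
    (t0 : ℝ) {b : ℝ} (hb : 0 ≤ b) :
    (∫ s in (0:ℝ)..b, ∫ z in ((t0 - s)/2)..((t0 + s)/2), Kc ((t0 + s)/2, z) * Fc (z, (t0 - s)/2))
    = ∫ s in (0:ℝ)..b, ∫ τ in t0..(t0 + b - s),
        Fc ((τ - s)/2, t0 - (τ + s)/2) * Kc ((τ + s)/2, (τ - s)/2) := by
  set Q : ℝ → ℝ → ℝ := fun τ s => Fc ((τ - s)/2, t0 - (τ + s)/2) * Kc ((τ + s)/2, (τ - s)/2)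
    with hQ
  have hQc : Continuous fun p : ℝ × ℝ => Q p.1 p.2 := by
    apply Continuous.mul
    · exact hFc.comp (by fun_prop)
    · exact hKc.comp (by fun_prop)
  have stepA : ∀ s : ℝ,
      (∫ z in ((t0 - s)/2)..((t0 + s)/2), Kc ((t0 + s)/2, z) * Fc (z, (t0 - s)/2))
      = ∫ τ in t0..(t0 + s), Q τ (t0 + s - τ) := by
    intro s
    have h1 : (∫ τ in t0..(t0 + s), Q τ (t0 + s - τ))
        = ∫ τ in t0..(t0 + s),
            (fun z => Kc ((t0 + s)/2, z) * Fc (z, (t0 - s)/2)) (τ - (t0 + s)/2) := by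
      apply intervalIntegral.integral_congr
      intro τ _
      show Fc _ * Kc _ = Kc _ * Fc _
      rw [mul_comm]
      congr 1 <;> · congr 1 <;> ring
    rw [h1, intervalIntegral.integral_comp_sub_right
      (fun z => Kc ((t0 + s)/2, z) * Fc (z, (t0 - s)/2)) ((t0 + s)/2)]
    rw [show t0 - (t0 + s)/2 = (t0 - s)/2 by ring, show t0 + s - (t0 + s)/2 = (t0 + s)/2 by ring]
  simp only [stepA]
  have stepB : (∫ s in (0:ℝ)..b, ∫ τ in t0..(t0 + s), Q τ (t0 + s - τ))
      = ∫ w in t0..(t0 + b), ∫ τ in t0..w, Q τ (w - τ) := by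
    have := intervalIntegral.integral_comp_add_left
      (fun w => ∫ τ in t0..w, Q τ (w - τ)) t0 (a := (0:ℝ)) (b := b)
    simpa using this
  rw [stepB]
  rw [triangle_swap (R := fun τ w => Q τ (w - τ))
    (by exact hQc.comp (continuous_fst.prodMk (continuous_snd.sub continuous_fst)))
    (by linarith : t0 ≤ t0 + b)]
  have stepD : ∀ τ : ℝ, (∫ w in τ..(t0 + b), Q τ (w - τ))
      = ∫ w in τ..(t0 + b), Q τ ((t0 + b) - w) := by
    intro τ
    rw [intervalIntegral.integral_comp_sub_right (fun s => Q τ s) τ,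
      intervalIntegral.integral_comp_sub_left (fun s => Q τ s) (t0 + b)]
    rw [show τ - τ = (0:ℝ) by ring, show (t0 + b) - (t0 + b) = (0:ℝ) by ring]
  simp only [stepD]
  rw [← triangle_swap (R := fun τ w => Q τ ((t0 + b) - w))
    (by exact hQc.comp (continuous_fst.prodMk (continuous_const.sub continuous_snd)))
    (by linarith : t0 ≤ t0 + b)]
  have stepF := intervalIntegral.integral_comp_sub_left
    (fun w => ∫ τ in t0..w, Q τ ((t0 + b) - w)) (t0 + b) (a := (0:ℝ)) (b := b)
  rw [show t0 + b - b = t0 by ring, show t0 + b - 0 = t0 + b by ring] at stepF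
  rw [← stepF]
  apply intervalIntegral.integral_congr
  intro s _
  show (∫ τ in t0..(t0 + b - s), Q τ (t0 + b - (t0 + b - s))) = _
  rw [show t0 + b - (t0 + b - s) = s by ring]

/-! ### Second-derivative machinery -/

section DerivMachinery

variable {K : ℝ × ℝ → ℝ}

lemma hK1smooth (hC2 : ContDiffOn ℝ 2 K Dset) :
    ContDiffOn ℝ 1 (fderivWithin ℝ K Dset) Dset :=
  hC2.fderivWithin Dset_uniqueDiffOn (by norm_num)

lemma hasFDeriv_apply (hC2 : ContDiffOn ℝ 2 K Dset) {p : ℝ × ℝ} (hp : p ∈ Dset) (v : ℝ × ℝ) :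
    HasFDerivWithinAt (fun q => fderivWithin ℝ K Dset q v)
      ((ContinuousLinearMap.apply ℝ ℝ v).comp
        (fderivWithin ℝ (fderivWithin ℝ K Dset) Dset p)) Dset p := by
  have hd : DifferentiableWithinAt ℝ (fderivWithin ℝ K Dset) Dset p :=
    ((hK1smooth hC2).differentiableOn (by norm_num)) p hp
  exact (ContinuousLinearMap.apply ℝ ℝ v).hasFDerivAt.comp_hasFDerivWithinAt p
    hd.hasFDerivWithinAt

lemma pd_pd (hC2 : ContDiffOn ℝ 2 K Dset) {p : ℝ × ℝ} (hp : p ∈ Dset) (v w : ℝ × ℝ) :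
    fderivWithin ℝ (fun q => fderivWithin ℝ K Dset q v) Dset p w
      = fderivWithin ℝ (fderivWithin ℝ K Dset) Dset p w v := by
  rw [(hasFDeriv_apply hC2 hp v).fderivWithin (Dset_uniqueDiffOn p hp)]
  rfl

lemma wave (hC2 : ContDiffOn ℝ 2 K Dset) {p : ℝ × ℝ} (hp : p ∈ Dset) :
    fderivWithin ℝ (fderivWithin ℝ K Dset) Dset p (1, -1) (1, 1)
      = pd1 (pd1 K) p - pd2 (pd2 K) p := by
  have hsymm : IsSymmSndFDerivWithinAt ℝ K Dset p :=
    (hC2 p hp).isSymmSndFDerivWithinAt (by simp) Dset_uniqueDiffOn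
      (Dset_mem_closure_interior hp) hp
  have hs := hsymm.eq (1, 0) (0, 1)
  unfold pd1 pd2
  rw [pd_pd hC2 hp, pd_pd hC2 hp]
  have h1 : ((1:ℝ), (-1:ℝ)) = (((1:ℝ), (0:ℝ)) : ℝ × ℝ) - ((0:ℝ), (1:ℝ)) := by
    simp [Prod.ext_iff]
  have h2 : ((1:ℝ), (1:ℝ)) = (((1:ℝ), (0:ℝ)) : ℝ × ℝ) + ((0:ℝ), (1:ℝ)) := by
    simp [Prod.ext_iff]
  rw [h1, h2, map_sub]
  simp only [ContinuousLinearMap.sub_apply, map_add]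
  linarith [hs]

end DerivMachinery


/-! ### The function `W` and its properties -/

section WSection

variable (lam0 : ℝ) (Cc : ℝ → ℝ) (Kc Fc : ℝ × ℝ → ℝ)

/-- The full right-hand side of the transformed PDE, written with globally continuous data. -/
def Wfun (τ s : ℝ) : ℝ :=
  (lam0 - Cc ((τ + s)/2) + Cc ((τ - s)/2)) * Kc ((τ + s)/2, (τ - s)/2)
    + Fc ((τ + s)/2, (τ - s)/2)
    + ∫ z in ((τ - s)/2)..((τ + s)/2), Kc ((τ + s)/2, z) * Fc (z, (τ - s)/2)

lemma intIc_cont (hKc : Continuous Kc) (hFc : Continuous Fc) :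
    Continuous fun p : ℝ × ℝ =>
      ∫ z in ((p.1 - p.2)/2)..((p.1 + p.2)/2), Kc ((p.1 + p.2)/2, z) * Fc (z, (p.1 - p.2)/2) := by
  have hcont : Continuous (Function.uncurry fun (p : ℝ × ℝ) (z : ℝ) =>
      Kc ((p.1 + p.2)/2, z) * Fc (z, (p.1 - p.2)/2)) := by fun_prop
  have h1 : Continuous fun p : ℝ × ℝ =>
      ∫ z in (0:ℝ)..((p.1 + p.2)/2), Kc ((p.1 + p.2)/2, z) * Fc (z, (p.1 - p.2)/2) :=
    intervalIntegral.continuous_parametric_intervalIntegral_of_continuous (μ := volume) hcont (by fun_prop)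
  have h2 : Continuous fun p : ℝ × ℝ =>
      ∫ z in (0:ℝ)..((p.1 - p.2)/2), Kc ((p.1 + p.2)/2, z) * Fc (z, (p.1 - p.2)/2) :=
    intervalIntegral.continuous_parametric_intervalIntegral_of_continuous (μ := volume) hcont (by fun_prop)
  have key : ∀ p : ℝ × ℝ, (∫ z in ((p.1 - p.2)/2)..((p.1 + p.2)/2),
      Kc ((p.1 + p.2)/2, z) * Fc (z, (p.1 - p.2)/2))
      = (∫ z in (0:ℝ)..((p.1 + p.2)/2), Kc ((p.1 + p.2)/2, z) * Fc (z, (p.1 - p.2)/2))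
        - ∫ z in (0:ℝ)..((p.1 - p.2)/2), Kc ((p.1 + p.2)/2, z) * Fc (z, (p.1 - p.2)/2) := by
    intro p
    rw [intervalIntegral.integral_interval_sub_left]
    · exact Continuous.intervalIntegrable (by fun_prop) _ _
    · exact Continuous.intervalIntegrable (by fun_prop) _ _
  have : (fun p : ℝ × ℝ => ∫ z in ((p.1 - p.2)/2)..((p.1 + p.2)/2),
      Kc ((p.1 + p.2)/2, z) * Fc (z, (p.1 - p.2)/2)) = fun p =>
      (∫ z in (0:ℝ)..((p.1 + p.2)/2), Kc ((p.1 + p.2)/2, z) * Fc (z, (p.1 - p.2)/2))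
        - ∫ z in (0:ℝ)..((p.1 - p.2)/2), Kc ((p.1 + p.2)/2, z) * Fc (z, (p.1 - p.2)/2) :=
    funext key
  rw [this]
  exact h1.sub h2

lemma Wfun_cont (hCc : Continuous Cc) (hKc : Continuous Kc) (hFc : Continuous Fc) :
    Continuous fun p : ℝ × ℝ => Wfun lam0 Cc Kc Fc p.1 p.2 := by
  unfold Wfun
  exact (Continuous.add (by fun_prop) (by fun_prop)).add (intIc_cont Kc Fc hKc hFc)

end WSection


/-! ### FTC along segments -/

section FTCSection

variable {K : ℝ × ℝ → ℝ}

lemma mem_Dset {τ s : ℝ} (h1 : 0 ≤ s) (h2 : s ≤ τ) (h3 : τ + s ≤ 2) :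
    (((τ + s)/2, (τ - s)/2) : ℝ × ℝ) ∈ Dset := by
  refine ⟨?_, ?_, ?_⟩
  · show (0:ℝ) ≤ (τ - s)/2; linarith
  · show (τ - s)/2 ≤ (τ + s)/2; linarith
  · show (τ + s)/2 ≤ 1; linarith

lemma Bf_contOn (hC2 : ContDiffOn ℝ 2 K Dset) :
    ContinuousOn (fun p : ℝ × ℝ => fderivWithin ℝ K Dset p (1, 1)) Dset := by
  exact (ContinuousLinearMap.apply ℝ ℝ ((1:ℝ), (1:ℝ))).continuous.comp_continuousOn
    ((hK1smooth hC2).continuousOn)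

lemma FTC2key (lam0 : ℝ) (Cc : ℝ → ℝ) (Kc Fc : ℝ × ℝ → ℝ) (hC2 : ContDiffOn ℝ 2 K Dset)
    (hBC2 : ∀ x ∈ Icc (0:ℝ) 1, pd1 K (x, x) + pd2 K (x, x) = lam0 / 2)
    (hWeq : ∀ τ s : ℝ, 0 ≤ s → s ≤ τ → τ + s ≤ 2 →
      fderivWithin ℝ (fderivWithin ℝ K Dset) Dset ((τ + s)/2, (τ - s)/2) (1, -1) (1, 1)
        = Wfun lam0 Cc Kc Fc τ s)
    (hWcont : Continuous fun p : ℝ × ℝ => Wfun lam0 Cc Kc Fc p.1 p.2)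
    {τ b : ℝ} (hb0 : 0 ≤ b) (hbτ : b ≤ τ) (hb2 : τ + b ≤ 2) :
    fderivWithin ℝ K Dset ((τ + b)/2, (τ - b)/2) (1, 1)
      = lam0 / 2 + (1/2) * ∫ s in (0:ℝ)..b, Wfun lam0 Cc Kc Fc τ s := by
  have hMaps : MapsTo (fun s : ℝ => (((τ + s)/2, (τ - s)/2) : ℝ × ℝ)) (Icc 0 b) Dset := by
    intro s hs
    exact mem_Dset hs.1 (hs.2.trans hbτ) (by linarith [hs.2])
  have hline : ∀ s : ℝ, HasDerivAt (fun s : ℝ => (((τ + s)/2, (τ - s)/2) : ℝ × ℝ))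
      ((1/2 : ℝ), (-(1/2) : ℝ)) s := by
    intro s
    apply HasDerivAt.prodMk
    · simpa using ((hasDerivAt_id s).const_add τ).div_const 2
    · rw [show (-(1/2) : ℝ) = -1 / 2 by norm_num]
      simpa using ((hasDerivAt_id s).const_sub τ).div_const 2
  have hg : ∀ s ∈ Ioo (0:ℝ) b, HasDerivWithinAt
      (fun s : ℝ => fderivWithin ℝ K Dset ((τ + s)/2, (τ - s)/2) (1, 1))
      ((1/2) * Wfun lam0 Cc Kc Fc τ s) (Icc 0 b) s := by
    intro s hs
    have hp : (((τ + s)/2, (τ - s)/2) : ℝ × ℝ) ∈ Dset :=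
      mem_Dset hs.1.le (hs.2.le.trans hbτ) (by linarith [hs.2.le])
    have hcomp := (hasFDeriv_apply hC2 hp (1, 1)).comp_hasDerivWithinAt s
      (hline s).hasDerivWithinAt hMaps
    have hval : ((ContinuousLinearMap.apply ℝ ℝ ((1:ℝ), (1:ℝ))).comp
        (fderivWithin ℝ (fderivWithin ℝ K Dset) Dset (((τ + s)/2, (τ - s)/2))))
          ((1/2 : ℝ), (-(1/2) : ℝ))
        = (1/2) * Wfun lam0 Cc Kc Fc τ s := by
      rw [ContinuousLinearMap.comp_apply]
      rw [show ((1/2 : ℝ), (-(1/2) : ℝ)) = (1/2 : ℝ) • (((1:ℝ), (-1:ℝ)) : ℝ × ℝ) by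
        norm_num [Prod.ext_iff]]
      rw [_root_.map_smul]
      simp only [ContinuousLinearMap.apply_apply, ContinuousLinearMap.coe_smul',
        Pi.smul_apply, smul_eq_mul]
      rw [hWeq τ s hs.1.le (hs.2.le.trans hbτ) (by linarith [hs.2.le])]
    rw [← hval]
    exact hcomp
  have hcont : ContinuousOn
      (fun s : ℝ => fderivWithin ℝ K Dset ((τ + s)/2, (τ - s)/2) (1, 1)) (Icc 0 b) :=
    (Bf_contOn hC2).comp (Continuous.continuousOn (by fun_prop)) hMaps
  have hint : IntervalIntegrable (fun s => (1/2) * Wfun lam0 Cc Kc Fc τ s) volume 0 b := by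
    apply Continuous.intervalIntegrable
    exact continuous_const.mul
      (hWcont.comp (by fun_prop : Continuous fun s : ℝ => ((τ, s) : ℝ × ℝ)))
  have hFTC := ftc_seg hb0 hcont hg hint
  have h0 : fderivWithin ℝ K Dset ((τ + 0)/2, (τ - 0)/2) (1, 1) = lam0 / 2 := by
    rw [show ((τ + 0)/2 : ℝ) = τ/2 by ring, show ((τ - 0)/2 : ℝ) = τ/2 by ring]
    have h := hBC2 (τ/2) ⟨by linarith, by linarith⟩
    rw [pd1, pd2] at h
    rw [show (((1:ℝ), (1:ℝ)) : ℝ × ℝ) = ((1, 0) : ℝ × ℝ) + ((0, 1) : ℝ × ℝ) by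
      simp [Prod.ext_iff]]
    rw [map_add]
    linarith
  rw [h0] at hFTC
  rw [intervalIntegral.integral_const_mul] at hFTC
  linarith

lemma FTC_diag (hC2 : ContDiffOn ℝ 2 K Dset)
    (hBC3 : ∀ x ∈ Icc (0:ℝ) 1, pd2 K (x, 0) = 0)
    {η : ℝ} (h0 : 0 ≤ η) (h1 : η ≤ 1) :
    (∫ τ in (0:ℝ)..η, fderivWithin ℝ K Dset (τ, 0) (1, 1)) = K (η, 0) - K (0, 0) := by
  have hMaps : MapsTo (fun τ : ℝ => ((τ, 0) : ℝ × ℝ)) (Icc 0 η) Dset := by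
    intro τ hτ
    exact ⟨le_refl 0, hτ.1, hτ.2.trans h1⟩
  apply ftc_seg h0
  · exact hC2.continuousOn.comp (Continuous.continuousOn (by fun_prop)) hMaps
  · intro τ hτ
    have hp : ((τ, 0) : ℝ × ℝ) ∈ Dset := ⟨le_refl 0, hτ.1.le, by linarith [hτ.2]⟩
    have hKd : HasFDerivWithinAt K (fderivWithin ℝ K Dset (τ, 0)) Dset (τ, 0) :=
      ((hC2.differentiableOn (by norm_num)) _ hp).hasFDerivWithinAt
    have hline : HasDerivAt (fun τ : ℝ => ((τ, 0) : ℝ × ℝ)) ((1 : ℝ), (0 : ℝ)) τ :=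
      (hasDerivAt_id τ).prodMk (hasDerivAt_const τ 0)
    have hcomp := hKd.comp_hasDerivWithinAt τ hline.hasDerivWithinAt hMaps
    have hval : fderivWithin ℝ K Dset (τ, 0) ((1 : ℝ), (0 : ℝ))
        = fderivWithin ℝ K Dset (τ, 0) (1, 1) := by
      have hz := hBC3 τ ⟨hτ.1.le, by linarith [hτ.2]⟩
      rw [pd2] at hz
      rw [show (((1:ℝ), (1:ℝ)) : ℝ × ℝ) = ((1, 0) : ℝ × ℝ) + ((0, 1) : ℝ × ℝ) by
        simp [Prod.ext_iff]]
      rw [map_add, hz, add_zero]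
    rw [← hval]
    exact hcomp
  · apply ContinuousOn.intervalIntegrable
    rw [uIcc_of_le h0]
    exact (Bf_contOn hC2).comp (Continuous.continuousOn (by fun_prop)) hMaps

lemma FTC_hor (hC2 : ContDiffOn ℝ 2 K Dset)
    {η ξ : ℝ} (he0 : 0 ≤ η) (hex : η ≤ ξ) (hx2 : ξ ≤ 2 - η) :
    (∫ τ in η..ξ, (1/2) * fderivWithin ℝ K Dset ((τ + η)/2, (τ - η)/2) (1, 1))
      = K ((ξ + η)/2, (ξ - η)/2) - K ((η + η)/2, (η - η)/2) := by
  have hMaps : MapsTo (fun τ : ℝ => (((τ + η)/2, (τ - η)/2) : ℝ × ℝ)) (Icc η ξ) Dset := by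
    intro τ hτ
    exact mem_Dset he0 hτ.1 (by linarith [hτ.2])
  apply ftc_seg hex
  · exact hC2.continuousOn.comp (Continuous.continuousOn (by fun_prop)) hMaps
  · intro τ hτ
    have hp : (((τ + η)/2, (τ - η)/2) : ℝ × ℝ) ∈ Dset :=
      mem_Dset he0 hτ.1.le (by linarith [hτ.2.le])
    have hKd : HasFDerivWithinAt K (fderivWithin ℝ K Dset (((τ + η)/2, (τ - η)/2))) Dset
        (((τ + η)/2, (τ - η)/2)) :=
      ((hC2.differentiableOn (by norm_num)) _ hp).hasFDerivWithinAt
    have hline : HasDerivAt (fun τ : ℝ => (((τ + η)/2, (τ - η)/2) : ℝ × ℝ))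
        ((1/2 : ℝ), (1/2 : ℝ)) τ := by
      apply HasDerivAt.prodMk
      · simpa using ((hasDerivAt_id τ).add_const η).div_const 2
      · simpa using ((hasDerivAt_id τ).sub_const η).div_const 2
    have hcomp := hKd.comp_hasDerivWithinAt τ hline.hasDerivWithinAt hMaps
    have hval : fderivWithin ℝ K Dset (((τ + η)/2, (τ - η)/2)) ((1/2 : ℝ), (1/2 : ℝ))
        = (1/2) * fderivWithin ℝ K Dset ((τ + η)/2, (τ - η)/2) (1, 1) := by
      rw [show ((1/2 : ℝ), (1/2 : ℝ)) = (1/2 : ℝ) • (((1:ℝ), (1:ℝ)) : ℝ × ℝ) by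
        norm_num [Prod.ext_iff]]
      rw [_root_.map_smul, smul_eq_mul]
    rw [← hval]
    exact hcomp
  · apply ContinuousOn.intervalIntegrable
    rw [uIcc_of_le hex]
    exact (continuousOn_const.mul
      ((Bf_contOn hC2).comp (Continuous.continuousOn (by fun_prop)) hMaps))

end FTCSection


lemma double_split {A B C : ℝ → ℝ → ℝ} (hA : Continuous fun p : ℝ × ℝ => A p.1 p.2)
    (hB : Continuous fun p : ℝ × ℝ => B p.1 p.2) (hC : Continuous fun p : ℝ × ℝ => C p.1 p.2)
    {u : ℝ → ℝ} (hu : Continuous u) (a b : ℝ) :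
    (∫ τ in a..b, ∫ s in (0:ℝ)..u τ, (A τ s + B τ s + C τ s))
      = (∫ τ in a..b, ∫ s in (0:ℝ)..u τ, A τ s) + (∫ τ in a..b, ∫ s in (0:ℝ)..u τ, B τ s)
        + (∫ τ in a..b, ∫ s in (0:ℝ)..u τ, C τ s) := by
  have iA : ∀ τ : ℝ, IntervalIntegrable (fun s => A τ s) volume 0 (u τ) := fun τ =>
    Continuous.intervalIntegrable (by exact hA.comp (Continuous.prodMk_right τ)) _ _
  have iB : ∀ τ : ℝ, IntervalIntegrable (fun s => B τ s) volume 0 (u τ) := fun τ =>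
    Continuous.intervalIntegrable (by exact hB.comp (Continuous.prodMk_right τ)) _ _
  have iC : ∀ τ : ℝ, IntervalIntegrable (fun s => C τ s) volume 0 (u τ) := fun τ =>
    Continuous.intervalIntegrable (by exact hC.comp (Continuous.prodMk_right τ)) _ _
  have hinner : ∀ τ : ℝ, (∫ s in (0:ℝ)..u τ, (A τ s + B τ s + C τ s))
      = (∫ s in (0:ℝ)..u τ, A τ s) + (∫ s in (0:ℝ)..u τ, B τ s)
        + (∫ s in (0:ℝ)..u τ, C τ s) := by
    intro τ
    rw [intervalIntegral.integral_add ((iA τ).add (iB τ)) (iC τ),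
      intervalIntegral.integral_add (iA τ) (iB τ)]
  rw [intervalIntegral.integral_congr (fun τ _ => hinner τ)]
  have pA : Continuous fun τ => ∫ s in (0:ℝ)..u τ, A τ s :=
    intervalIntegral.continuous_parametric_intervalIntegral_of_continuous (μ := volume) hA hu
  have pB : Continuous fun τ => ∫ s in (0:ℝ)..u τ, B τ s :=
    intervalIntegral.continuous_parametric_intervalIntegral_of_continuous (μ := volume) hB hu
  have pC : Continuous fun τ => ∫ s in (0:ℝ)..u τ, C τ s :=
    intervalIntegral.continuous_parametric_intervalIntegral_of_continuous (μ := volume) hC hu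
  rw [intervalIntegral.integral_add ((pA.intervalIntegrable _ _).add (pB.intervalIntegrable _ _))
    (pC.intervalIntegrable _ _),
    intervalIntegral.integral_add (pA.intervalIntegrable _ _) (pB.intervalIntegrable _ _)]

/-- If `k` solves the kernel equation, then `G(ξ,η) := k((ξ+η)/2, (ξ-η)/2)` satisfies the
integral equation `G = G0 + Φ_G` on `E`. -/
theorem kernel_solution_satisfies_integral_equation (lam0 : ℝ) (hlam0 : 0 < lam0)
    (c1 : ℝ → ℝ) (hc1 : ContinuousOn c1 (Icc 0 1))
    (f : ℝ → ℝ → ℝ)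
    (hf : ContinuousOn (fun p : ℝ × ℝ => f p.1 p.2) (Icc 0 1 ×ˢ Icc 0 1))
    (K : ℝ × ℝ → ℝ) (hK : IsKernelSol lam0 c1 f K) :
    ∀ xi eta : ℝ, (xi, eta) ∈ Eset →
      K ((xi + eta) / 2, (xi - eta) / 2) =
        Gzero lam0 f xi eta
          + Phi lam0 c1 f (fun xi' eta' => K ((xi' + eta') / 2, (xi' - eta') / 2)) xi eta := by
  obtain ⟨hC2, hPDE, hBC2, hBC3, hBC4⟩ := hK
  intro xi eta hE
  obtain ⟨he0, he1, hex, hx2⟩ := hE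
  simp only [] at he0 he1 hex hx2
  obtain ⟨Kc, hKc, hKcEq⟩ := exists_cont_ext Dset_isClosed hC2.continuousOn
  obtain ⟨Fc, hFc, hFcEq⟩ := exists_cont_ext (isClosed_Icc.prod isClosed_Icc) hf
  obtain ⟨Cc, hCc, hCcEq⟩ := exists_cont_ext isClosed_Icc hc1
  have hWcont := Wfun_cont lam0 Cc Kc Fc hCc hKc hFc
  -- The transformed PDE with globally continuous data
  have hWeq : ∀ τ s : ℝ, 0 ≤ s → s ≤ τ → τ + s ≤ 2 →
      fderivWithin ℝ (fderivWithin ℝ K Dset) Dset ((τ + s)/2, (τ - s)/2) (1, -1) (1, 1)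
        = Wfun lam0 Cc Kc Fc τ s := by
    intro τ s h1 h2 h3
    have hp : (((τ + s)/2, (τ - s)/2) : ℝ × ℝ) ∈ Dset := mem_Dset h1 h2 h3
    have hx01 : ((τ + s)/2 : ℝ) ∈ Icc (0:ℝ) 1 := ⟨by linarith, by linarith⟩
    have hy01 : ((τ - s)/2 : ℝ) ∈ Icc (0:ℝ) 1 := ⟨by linarith, by linarith⟩
    have hpde := hPDE _ hp
    simp only [] at hpde
    rw [wave hC2 hp, hpde]
    unfold Wfun
    have e1 : Cc ((τ + s)/2) = c1 ((τ + s)/2) := hCcEq _ hx01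
    have e2 : Cc ((τ - s)/2) = c1 ((τ - s)/2) := hCcEq _ hy01
    have eK : Kc ((τ + s)/2, (τ - s)/2) = K ((τ + s)/2, (τ - s)/2) := hKcEq _ hp
    have eF : Fc ((τ + s)/2, (τ - s)/2) = f ((τ + s)/2) ((τ - s)/2) := by
      have := hFcEq ((τ + s)/2, (τ - s)/2) ⟨hx01, hy01⟩
      simpa using this
    have eInt : (∫ z in ((τ - s)/2)..((τ + s)/2), Kc ((τ + s)/2, z) * Fc (z, (τ - s)/2))
        = ∫ z in ((τ - s)/2)..((τ + s)/2), K ((τ + s)/2, z) * f z ((τ - s)/2) := by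
      apply intervalIntegral.integral_congr
      intro z hz
      rw [uIcc_of_le (by linarith : ((τ - s)/2 : ℝ) ≤ (τ + s)/2)] at hz
      have hzD : (((τ + s)/2, z) : ℝ × ℝ) ∈ Dset :=
        ⟨le_trans hy01.1 hz.1, hz.2, hx01.2⟩
      have hz01 : z ∈ Icc (0:ℝ) 1 := ⟨le_trans hy01.1 hz.1, le_trans hz.2 hx01.2⟩
      have eK' := hKcEq _ hzD
      have eF' := hFcEq (z, (τ - s)/2) ⟨hz01, hy01⟩
      simp only [] at eF'
      show Kc ((τ + s)/2, z) * Fc (z, (τ - s)/2) = K ((τ + s)/2, z) * f z ((τ - s)/2)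
      rw [eK', eF']
    rw [e1, e2, eK, eF, eInt]
  -- FTC in the vertical direction
  have hB : ∀ {τ b : ℝ}, 0 ≤ b → b ≤ τ → τ + b ≤ 2 →
      fderivWithin ℝ K Dset ((τ + b)/2, (τ - b)/2) (1, 1)
        = lam0 / 2 + (1/2) * ∫ s in (0:ℝ)..b, Wfun lam0 Cc Kc Fc τ s :=
    fun hb0 hbτ hb2 => FTC2key lam0 Cc Kc Fc hC2 hBC2 hWeq hWcont hb0 hbτ hb2
  -- the value K(eta, 0) via the diagonal
  have hdiag3 : K (eta, 0) = lam0/2*eta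
      + (1/2) * ∫ τ in (0:ℝ)..eta, ∫ s in (0:ℝ)..τ, Wfun lam0 Cc Kc Fc τ s := by
    have hdiag1 := FTC_diag hC2 hBC3 he0 he1
    have hdiag2 : ∀ τ ∈ uIcc (0:ℝ) eta, fderivWithin ℝ K Dset (τ, 0) (1, 1)
        = lam0/2 + (1/2) * ∫ s in (0:ℝ)..τ, Wfun lam0 Cc Kc Fc τ s := by
      intro τ hτ
      rw [uIcc_of_le he0] at hτ
      have := hB (τ := τ) (b := τ) hτ.1 le_rfl (by linarith [hτ.2])
      rw [show ((τ + τ)/2 : ℝ) = τ by ring, show ((τ - τ)/2 : ℝ) = 0 by ring] at this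
      exact this
    have hcongr := intervalIntegral.integral_congr (μ := volume) hdiag2
    rw [hdiag1, hBC4] at hcongr
    have hacont : Continuous fun τ : ℝ => ∫ s in (0:ℝ)..τ, Wfun lam0 Cc Kc Fc τ s :=
      intervalIntegral.continuous_parametric_intervalIntegral_of_continuous (μ := volume)
        (f := fun τ s => Wfun lam0 Cc Kc Fc τ s) (by exact hWcont) continuous_id
    rw [intervalIntegral.integral_add intervalIntegrable_const
      (Continuous.intervalIntegrable (u := fun τ : ℝ =>
        (1/2 : ℝ) * ∫ s in (0:ℝ)..τ, Wfun lam0 Cc Kc Fc τ s) (continuous_const.mul hacont) _ _)] at hcongr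
    rw [intervalIntegral.integral_const, intervalIntegral.integral_const_mul] at hcongr
    simp only [smul_eq_mul, sub_zero] at hcongr
    linarith [hcongr]
  -- the main representation of K at (xi, eta)
  have hKmain : K ((xi + eta)/2, (xi - eta)/2)
      = lam0/2*eta + (1/2) * (∫ τ in (0:ℝ)..eta, ∫ s in (0:ℝ)..τ, Wfun lam0 Cc Kc Fc τ s)
        + (lam0/4*(xi - eta)
          + (1/4) * ∫ τ in eta..xi, ∫ s in (0:ℝ)..eta, Wfun lam0 Cc Kc Fc τ s) := by
    have hhor1 := FTC_hor hC2 he0 hex hx2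
    rw [show ((eta + eta)/2 : ℝ) = eta by ring, show ((eta - eta)/2 : ℝ) = 0 by ring] at hhor1
    have hhor2 : ∀ τ ∈ uIcc eta xi,
        (1/2 : ℝ) * fderivWithin ℝ K Dset ((τ + eta)/2, (τ - eta)/2) (1, 1)
        = lam0/4 + (1/4) * ∫ s in (0:ℝ)..eta, Wfun lam0 Cc Kc Fc τ s := by
      intro τ hτ
      rw [uIcc_of_le hex] at hτ
      rw [hB he0 hτ.1 (by linarith [hτ.2])]
      ring
    have h1 := intervalIntegral.integral_congr (μ := volume) hhor2
    rw [hhor1] at h1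
    have hhcont : Continuous fun τ : ℝ => ∫ s in (0:ℝ)..eta, Wfun lam0 Cc Kc Fc τ s :=
      intervalIntegral.continuous_parametric_intervalIntegral_of_continuous' (μ := volume)
        (f := fun τ s => Wfun lam0 Cc Kc Fc τ s) (by exact hWcont) 0 eta
    rw [intervalIntegral.integral_add intervalIntegrable_const
      (Continuous.intervalIntegrable (u := fun τ : ℝ =>
        (1/4 : ℝ) * ∫ s in (0:ℝ)..eta, Wfun lam0 Cc Kc Fc τ s) (continuous_const.mul hhcont) _ _)] at h1
    rw [intervalIntegral.integral_const, intervalIntegral.integral_const_mul] at h1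
    simp only [smul_eq_mul] at h1
    rw [hdiag3] at h1
    linarith [h1]
  -- split the double integrals into three pieces
  have hA1 : Continuous fun p : ℝ × ℝ =>
      (lam0 - Cc ((p.1 + p.2)/2) + Cc ((p.1 - p.2)/2)) * Kc ((p.1 + p.2)/2, (p.1 - p.2)/2) := by
    fun_prop
  have hA2 : Continuous fun p : ℝ × ℝ => Fc ((p.1 + p.2)/2, (p.1 - p.2)/2) := by fun_prop
  have hA3 := intIc_cont Kc Fc hKc hFc
  have hsplit1 : (∫ τ in eta..xi, ∫ s in (0:ℝ)..eta, Wfun lam0 Cc Kc Fc τ s)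
      = (∫ τ in eta..xi, ∫ s in (0:ℝ)..eta,
          (lam0 - Cc ((τ + s)/2) + Cc ((τ - s)/2)) * Kc ((τ + s)/2, (τ - s)/2))
        + (∫ τ in eta..xi, ∫ s in (0:ℝ)..eta, Fc ((τ + s)/2, (τ - s)/2))
        + (∫ τ in eta..xi, ∫ s in (0:ℝ)..eta,
            ∫ z in ((τ - s)/2)..((τ + s)/2), Kc ((τ + s)/2, z) * Fc (z, (τ - s)/2)) := by
    exact double_split hA1 hA2 hA3 (continuous_const : Continuous fun _ : ℝ => eta) eta xi
  have hsplit2 : (∫ τ in (0:ℝ)..eta, ∫ s in (0:ℝ)..τ, Wfun lam0 Cc Kc Fc τ s)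
      = (∫ τ in (0:ℝ)..eta, ∫ s in (0:ℝ)..τ,
          (lam0 - Cc ((τ + s)/2) + Cc ((τ - s)/2)) * Kc ((τ + s)/2, (τ - s)/2))
        + (∫ τ in (0:ℝ)..eta, ∫ s in (0:ℝ)..τ, Fc ((τ + s)/2, (τ - s)/2))
        + (∫ τ in (0:ℝ)..eta, ∫ s in (0:ℝ)..τ,
            ∫ z in ((τ - s)/2)..((τ + s)/2), Kc ((τ + s)/2, z) * Fc (z, (τ - s)/2)) := by
    exact double_split hA1 hA2 hA3 continuous_id 0 eta
  -- matching the pieces with the statement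
  have hm1 : (∫ τ in eta..xi, ∫ s in (0:ℝ)..eta,
      (lam0 - Cc ((τ + s)/2) + Cc ((τ - s)/2)) * Kc ((τ + s)/2, (τ - s)/2))
      = ∫ tau in eta..xi, ∫ s in (0:ℝ)..eta,
          mutld lam0 c1 tau s * K ((tau + s)/2, (tau - s)/2) := by
    apply intervalIntegral.integral_congr
    intro τ hτ
    rw [uIcc_of_le hex] at hτ
    apply intervalIntegral.integral_congr
    intro s hs
    rw [uIcc_of_le he0] at hs
    have hp := mem_Dset hs.1 (hs.2.trans hτ.1) (by linarith [hτ.2, hs.2])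
    show (lam0 - Cc ((τ + s)/2) + Cc ((τ - s)/2)) * Kc ((τ + s)/2, (τ - s)/2)
      = mutld lam0 c1 τ s * K ((τ + s)/2, (τ - s)/2)
    unfold mutld
    rw [hCcEq _ ⟨by linarith [hτ.1, hs.1], by linarith [hτ.2, hs.2]⟩,
      hCcEq _ ⟨by linarith [hτ.1, hs.2], by linarith [hτ.2, hs.1]⟩, hKcEq _ hp]
  have hm1' : (∫ τ in (0:ℝ)..eta, ∫ s in (0:ℝ)..τ,
      (lam0 - Cc ((τ + s)/2) + Cc ((τ - s)/2)) * Kc ((τ + s)/2, (τ - s)/2))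
      = ∫ tau in (0:ℝ)..eta, ∫ s in (0:ℝ)..tau,
          mutld lam0 c1 tau s * K ((tau + s)/2, (tau - s)/2) := by
    apply intervalIntegral.integral_congr
    intro τ hτ
    rw [uIcc_of_le he0] at hτ
    apply intervalIntegral.integral_congr
    intro s hs
    rw [uIcc_of_le hτ.1] at hs
    have hp := mem_Dset hs.1 hs.2 (by linarith [hτ.2, hs.2])
    show (lam0 - Cc ((τ + s)/2) + Cc ((τ - s)/2)) * Kc ((τ + s)/2, (τ - s)/2)
      = mutld lam0 c1 τ s * K ((τ + s)/2, (τ - s)/2)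
    unfold mutld
    rw [hCcEq _ ⟨by linarith [hτ.1, hs.1], by linarith [hτ.2, hs.2]⟩,
      hCcEq _ ⟨by linarith [hs.2], by linarith [hτ.2, hs.1]⟩, hKcEq _ hp]
  have hm2 : (∫ τ in eta..xi, ∫ s in (0:ℝ)..eta, Fc ((τ + s)/2, (τ - s)/2))
      = ∫ tau in eta..xi, ∫ s in (0:ℝ)..eta, f ((tau + s)/2) ((tau - s)/2) := by
    apply intervalIntegral.integral_congr
    intro τ hτ
    rw [uIcc_of_le hex] at hτ
    apply intervalIntegral.integral_congr
    intro s hs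
    rw [uIcc_of_le he0] at hs
    have := hFcEq ((τ + s)/2, (τ - s)/2)
      ⟨⟨by linarith [hτ.1, hs.1], by linarith [hτ.2, hs.2]⟩,
        ⟨by linarith [hτ.1, hs.2], by linarith [hτ.2, hs.1]⟩⟩
    simp only [] at this
    exact this
  have hm2' : (∫ τ in (0:ℝ)..eta, ∫ s in (0:ℝ)..τ, Fc ((τ + s)/2, (τ - s)/2))
      = ∫ tau in (0:ℝ)..eta, ∫ s in (0:ℝ)..tau, f ((tau + s)/2) ((tau - s)/2) := by
    apply intervalIntegral.integral_congr
    intro τ hτ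
    rw [uIcc_of_le he0] at hτ
    apply intervalIntegral.integral_congr
    intro s hs
    rw [uIcc_of_le hτ.1] at hs
    have := hFcEq ((τ + s)/2, (τ - s)/2)
      ⟨⟨by linarith [hτ.1, hs.1], by linarith [hτ.2, hs.2]⟩,
        ⟨by linarith [hs.2], by linarith [hτ.2, hs.1]⟩⟩
    simp only [] at this
    exact this
  have hm3 : (∫ τ in eta..xi, ∫ s in (0:ℝ)..eta,
      ∫ z in ((τ - s)/2)..((τ + s)/2), Kc ((τ + s)/2, z) * Fc (z, (τ - s)/2))
      = ∫ z in eta..xi, ∫ s in (0:ℝ)..eta, ∫ tau in z..(z + eta - s),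
          f ((tau - s)/2) (z - (tau + s)/2) * K ((tau + s)/2, (tau - s)/2) := by
    apply intervalIntegral.integral_congr
    intro z hz
    rw [uIcc_of_le hex] at hz
    show (∫ s in (0:ℝ)..eta,
        ∫ zz in ((z - s)/2)..((z + s)/2), Kc ((z + s)/2, zz) * Fc (zz, (z - s)/2)) = _
    rw [chain_cov hKc hFc z he0]
    apply intervalIntegral.integral_congr
    intro s hs
    rw [uIcc_of_le he0] at hs
    apply intervalIntegral.integral_congr
    intro τ hτ
    rw [uIcc_of_le (by linarith [hs.2] : z ≤ z + eta - s)] at hτ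
    show Fc ((τ - s)/2, z - (τ + s)/2) * Kc ((τ + s)/2, (τ - s)/2)
      = f ((τ - s)/2) (z - (τ + s)/2) * K ((τ + s)/2, (τ - s)/2)
    have hp := mem_Dset hs.1 (le_trans (hs.2.trans hz.1) hτ.1)
      (by linarith [hτ.2, hz.2])
    have hFm := hFcEq ((τ - s)/2, z - (τ + s)/2)
      ⟨⟨by linarith [hτ.1, hs.2, hz.1], by linarith [hτ.2, hz.2, hs.1]⟩,
        ⟨by linarith [hτ.2, hz.1], by linarith [hτ.1, hs.1, hz.2]⟩⟩
    simp only [] at hFm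
    rw [hFm, hKcEq _ hp]
  have hm4 : (∫ τ in (0:ℝ)..eta, ∫ s in (0:ℝ)..τ,
      ∫ z in ((τ - s)/2)..((τ + s)/2), Kc ((τ + s)/2, z) * Fc (z, (τ - s)/2))
      = ∫ z in (0:ℝ)..eta, ∫ s in (0:ℝ)..z, ∫ tau in z..(2*z - s),
          f ((tau - s)/2) (z - (tau + s)/2) * K ((tau + s)/2, (tau - s)/2) := by
    apply intervalIntegral.integral_congr
    intro z hz
    rw [uIcc_of_le he0] at hz
    show (∫ s in (0:ℝ)..z,
        ∫ zz in ((z - s)/2)..((z + s)/2), Kc ((z + s)/2, zz) * Fc (zz, (z - s)/2)) = _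
    rw [chain_cov hKc hFc z hz.1]
    apply intervalIntegral.integral_congr
    intro s hs
    rw [uIcc_of_le hz.1] at hs
    show (∫ τ in z..(z + z - s), Fc ((τ - s)/2, z - (τ + s)/2) * Kc ((τ + s)/2, (τ - s)/2))
      = ∫ tau in z..(2*z - s), f ((tau - s)/2) (z - (tau + s)/2) * K ((tau + s)/2, (tau - s)/2)
    rw [show z + z - s = 2*z - s by ring]
    apply intervalIntegral.integral_congr
    intro τ hτ
    rw [uIcc_of_le (by linarith [hs.2] : z ≤ 2*z - s)] at hτ
    show Fc ((τ - s)/2, z - (τ + s)/2) * Kc ((τ + s)/2, (τ - s)/2)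
      = f ((τ - s)/2) (z - (τ + s)/2) * K ((τ + s)/2, (τ - s)/2)
    have hp := mem_Dset hs.1 (hs.2.trans hτ.1) (by linarith [hτ.2, hz.2])
    have hFm := hFcEq ((τ - s)/2, z - (τ + s)/2)
      ⟨⟨by linarith [hτ.1, hs.2], by linarith [hτ.2, hz.2, hs.1]⟩,
        ⟨by linarith [hτ.2], by linarith [hτ.1, hs.1, hz.2]⟩⟩
    simp only [] at hFm
    rw [hFm, hKcEq _ hp]
  -- conclusion
  rw [hm1, hm2, hm3] at hsplit1
  rw [hm1', hm2', hm4] at hsplit2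
  rw [hsplit1, hsplit2] at hKmain
  rw [hKmain]
  simp only [Gzero, Phi]
  ring
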